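/- Let $F : X \rightrightarrows Y$ be a closed convex set-valued mapping between Banach spaces, $A \subseteq X$ closed convex, $\bar y \in Y$, $S := F^{-1}(\bar y) \cap A$, and $\bar x \in S$. If the set $DF^{-1}(\bar y,\bar x)(B_Y) \cap (T(A,\bar x) + B_X) \cap B_X$ is relatively compact and there exists no $\eta > 0$ making the inclusion $DF^{-1}(\bar y,\bar x)(\eta_1 B_Y) \cap (T(A,\bar x) + \eta_2 B_X) \subseteq B_X$ hold for all $\eta_1,\eta_2 \geq 0$ with $\eta_1 + \eta_2 < \eta$, then there exists $x_0 \in X$ with $\|x_0\| = 1$ and $x_0 \in DF^{-1}(\bar y,\bar x)(0) \cap T(A,\bar x)$. -/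

import Mathlib

open Set Metric Filter Topology Pointwise

noncomputable section

/-- Contingent cone of a convex set: closure of ⋃_{t>0} (A - a)/t. -/
def contCone {X : Type*} [NormedAddCommGroup X] [NormedSpace ℝ X] (A : Set X) (a : X) : Set X :=
  closure {v : X | ∃ t : ℝ, 0 < t ∧ a + t • v ∈ A}

lemma contCone_smul_mem {X : Type*} [NormedAddCommGroup X] [NormedSpace ℝ X]
    (A : Set X) (a : X) {c : ℝ} (hc : 0 < c) {v : X} (hv : v ∈ contCone A a) :
    c • v ∈ contCone A a := by
  refine map_mem_closure (continuous_const_smul c) hv ?_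
  rintro w ⟨t, ht, hw⟩
  refine ⟨t / c, div_pos ht hc, ?_⟩
  rwa [smul_smul, div_mul_cancel₀ _ hc.ne']

theorem stmt8 {X Y : Type*} [NormedAddCommGroup X] [NormedSpace ℝ X] [CompleteSpace X]
    [NormedAddCommGroup Y] [NormedSpace ℝ Y] [CompleteSpace Y]
    (F : X → Set Y) (hFcl : IsClosed {p : X × Y | p.2 ∈ F p.1})
    (hFcv : Convex ℝ {p : X × Y | p.2 ∈ F p.1})
    (A : Set X) (hAcl : IsClosed A) (hAcv : Convex ℝ A)
    (ybar : Y) (xbar : X) (hxbar : xbar ∈ {x : X | ybar ∈ F x} ∩ A)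
    (hcomp : IsCompact (closure
      ({u : X | ∃ v ∈ closedBall (0 : Y) 1,
          (u, v) ∈ contCone {p : X × Y | p.2 ∈ F p.1} (xbar, ybar)} ∩
        (contCone A xbar + closedBall (0 : X) 1) ∩ closedBall (0 : X) 1)))
    (hno : ¬ ∃ η : ℝ, 0 < η ∧ ∀ η₁ η₂ : ℝ, 0 ≤ η₁ → 0 ≤ η₂ → η₁ + η₂ < η →
      {u : X | ∃ v ∈ closedBall (0 : Y) η₁,
          (u, v) ∈ contCone {p : X × Y | p.2 ∈ F p.1} (xbar, ybar)} ∩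
        (contCone A xbar + closedBall (0 : X) η₂) ⊆ closedBall (0 : X) 1) :
    ∃ x₀ : X, ‖x₀‖ = 1 ∧
      (x₀, (0 : Y)) ∈ contCone {p : X × Y | p.2 ∈ F p.1} (xbar, ybar) ∧
      x₀ ∈ contCone A xbar := by
  push_neg at hno
  set G := contCone {p : X × Y | p.2 ∈ F p.1} (xbar, ybar) with hG
  set T := contCone A xbar with hT
  have key : ∀ n : ℕ, ∃ (u a b : X) (v : Y),
      1 < ‖u‖ ∧ ‖v‖ ≤ 1 / (n + 1) ∧ (u, v) ∈ G ∧ a ∈ T ∧ ‖b‖ ≤ 1 / (n + 1) ∧ u = a + b := by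
    intro n
    obtain ⟨η₁, η₂, h1, h2, hlt, hns⟩ := hno (1 / (n + 1)) (by positivity)
    obtain ⟨u, hu, hunb⟩ := Set.not_subset.mp hns
    obtain ⟨v, hv, hvG⟩ := hu.1
    obtain ⟨a, ha, b, hb, hab⟩ := Set.mem_add.mp hu.2
    rw [mem_closedBall_zero_iff] at hv hb
    refine ⟨u, a, b, v, ?_, ?_, hvG, ha, ?_, hab.symm⟩
    · simpa [mem_closedBall_zero_iff, not_le] using hunb
    · linarith
    · linarith
  choose u a b v hu hv hG' ha hb hab using key
  set c : ℕ → ℝ := fun n => ‖u n‖⁻¹ with hc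
  have hc0 : ∀ n, 0 < c n := fun n => inv_pos.mpr (lt_trans one_pos (hu n))
  have hc1 : ∀ n, c n ≤ 1 := fun n => by
    rw [hc]; exact inv_le_one_of_one_le₀ (hu n).le
  set x : ℕ → X := fun n => c n • u n with hx
  have hxnorm : ∀ n, ‖x n‖ = 1 := by
    intro n
    rw [hx, norm_smul, Real.norm_eq_abs, abs_of_pos (hc0 n), hc,
      inv_mul_cancel₀ (lt_trans one_pos (hu n)).ne']
  set v' : ℕ → Y := fun n => c n • v n with hv'
  set b' : ℕ → X := fun n => c n • b n with hb'
  set a' : ℕ → X := fun n => c n • a n with ha'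
  have hv'norm : ∀ n, ‖v' n‖ ≤ 1 / (n + 1) := by
    intro n
    rw [hv', norm_smul, Real.norm_eq_abs, abs_of_pos (hc0 n)]
    calc c n * ‖v n‖ ≤ 1 * (1 / (n + 1)) := by
          exact mul_le_mul (hc1 n) (hv n) (norm_nonneg _) zero_le_one
      _ = 1 / (n + 1) := one_mul _
  have hb'norm : ∀ n, ‖b' n‖ ≤ 1 / (n + 1) := by
    intro n
    rw [hb', norm_smul, Real.norm_eq_abs, abs_of_pos (hc0 n)]
    calc c n * ‖b n‖ ≤ 1 * (1 / (n + 1)) := by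
          exact mul_le_mul (hc1 n) (hb n) (norm_nonneg _) zero_le_one
      _ = 1 / (n + 1) := one_mul _
  have hxab : ∀ n, x n = a' n + b' n := by
    intro n
    rw [hx, ha', hb', ← smul_add, ← hab n]
  have hxvG : ∀ n, (x n, v' n) ∈ G := by
    intro n
    have := contCone_smul_mem _ _ (hc0 n) (hG' n)
    rwa [Prod.smul_mk] at this
  have ha'T : ∀ n, a' n ∈ T := fun n => contCone_smul_mem _ _ (hc0 n) (ha n)
  have hn1 : ∀ n : ℕ, (1 : ℝ) / (n + 1) ≤ 1 := by
    intro n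
    rw [div_le_one (by positivity)]
    have : (0 : ℝ) ≤ n := Nat.cast_nonneg n
    linarith
  have hxK : ∀ n, x n ∈
      ({u : X | ∃ w ∈ closedBall (0 : Y) 1, (u, w) ∈ G} ∩
        (T + closedBall (0 : X) 1) ∩ closedBall (0 : X) 1) := by
    intro n
    refine ⟨⟨⟨v' n, ?_, hxvG n⟩, ?_⟩, ?_⟩
    · exact mem_closedBall_zero_iff.mpr ((hv'norm n).trans (hn1 n))
    · exact Set.mem_add.mpr ⟨a' n, ha'T n, b' n,
        mem_closedBall_zero_iff.mpr ((hb'norm n).trans (hn1 n)), (hxab n).symm⟩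
    · exact mem_closedBall_zero_iff.mpr (hxnorm n).le
  obtain ⟨x₀, hx₀K, φ, hφ, hconv⟩ :=
    hcomp.isSeqCompact (fun n => subset_closure (hxK n))
  have hφge : ∀ k : ℕ, (k : ℝ) ≤ (φ k : ℝ) := fun k => Nat.cast_le.mpr hφ.le_apply
  have hbound : ∀ k : ℕ, (1 : ℝ) / (φ k + 1) ≤ 1 / (k + 1) := by
    intro k
    exact one_div_le_one_div_of_le (by positivity) (by linarith [hφge k])
  have hv'0 : Tendsto (fun k => v' (φ k)) atTop (𝓝 0) := by
    refine squeeze_zero_norm (fun k => (hv'norm (φ k)).trans (hbound k)) ?_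
    simpa using tendsto_one_div_add_atTop_nhds_zero_nat (𝕜 := ℝ)
  have hb'0 : Tendsto (fun k => b' (φ k)) atTop (𝓝 0) := by
    refine squeeze_zero_norm (fun k => (hb'norm (φ k)).trans (hbound k)) ?_
    simpa using tendsto_one_div_add_atTop_nhds_zero_nat (𝕜 := ℝ)
  refine ⟨x₀, ?_, ?_, ?_⟩
  · have h1 : Tendsto (fun k => ‖(x ∘ φ) k‖) atTop (𝓝 ‖x₀‖) :=
      (continuous_norm.tendsto _).comp hconv
    have h2 : (fun k => ‖(x ∘ φ) k‖) = fun _ => (1 : ℝ) := by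
      funext k; exact hxnorm (φ k)
    rw [h2] at h1
    exact tendsto_nhds_unique h1 tendsto_const_nhds
  · have hGcl : IsClosed G := isClosed_closure
    refine hGcl.mem_of_tendsto (hconv.prodMk_nhds hv'0)
      (Eventually.of_forall fun k => hxvG (φ k))
  · have hTcl : IsClosed T := isClosed_closure
    have : Tendsto (fun k => a' (φ k)) atTop (𝓝 x₀) := by
      have h := hconv.sub hb'0
      rw [sub_zero] at h
      refine h.congr fun k => ?_
      simp [Function.comp, hxab (φ k)]
    exact hTcl.mem_of_tendsto this (Eventually.of_forall fun k => ha'T (φ k))
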